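/- A strictly positive probability distribution p on I belongs to the exponential family E_A if and only if the vector log p = (log p(i))_{i∈I} is orthogonal to the kernel of A (viewing A as a linear map ℝ^I → ℝ^J). -/

import Mathlib

/-- The discrete exponential family `E_A` as a set of distributions on `I`. -/
noncomputable def expFam {I J : Type} [Fintype I] [Fintype J] (A : J → I → ℝ) :
    Set (I → ℝ) :=
  {q | ∃ θ : J → ℝ, q = fun i =>
    Real.exp (∑ j, θ j * A j i - Real.log (∑ i', Real.exp (∑ j, θ j * A j i')))}

/-- Helper: affine log form implies membership in the exponential family. -/
theorem expFam_of_affine_log {I J : Type} [Fintype I] [Fintype J] [Nonempty I]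
    (A : J → I → ℝ) (p : I → ℝ) (hsum : ∑ i, p i = 1)
    (θ : J → ℝ) (d : ℝ) (h : ∀ i, p i = Real.exp (∑ j, θ j * A j i + d)) :
    p ∈ expFam A := by
  refine ⟨θ, ?_⟩
  have hZ : (∑ i', Real.exp (∑ j, θ j * A j i')) = Real.exp (-d) := by
    have : ∀ i', Real.exp (∑ j, θ j * A j i') = p i' * Real.exp (-d) := by
      intro i'
      rw [h i', ← Real.exp_add]
      ring_nf
    simp only [this, ← Finset.sum_mul, hsum, one_mul]
  funext i
  rw [hZ, Real.log_exp, h i]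
  ring_nf

/-- A strictly positive probability distribution `p` on `I` belongs to `E_A` if
and only if `log p` is orthogonal to the kernel of `Ã`, i.e. `⟨log p, v⟩ = 0` for every
`v : I → ℝ` with `A v = 0` and `∑ i, v i = 0`. -/
theorem mem_expFam_iff_log_orth_ker {I J : Type} [Fintype I] [Fintype J] [Nonempty I]
    (A : J → I → ℝ) (p : I → ℝ) (hpos : ∀ i, 0 < p i) (hsum : ∑ i, p i = 1) :
    p ∈ expFam A ↔
      ∀ v : I → ℝ, (∀ j, ∑ i, A j i * v i = 0) → (∑ i, v i = 0) →
        ∑ i, Real.log (p i) * v i = 0 := by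
  constructor
  · rintro ⟨θ, rfl⟩ v hker hsum0
    simp only [Real.log_exp]
    set L := Real.log (∑ i', Real.exp (∑ j, θ j * A j i')) with hL
    have : ∑ i, (∑ j, θ j * A j i - L) * v i
        = ∑ j, θ j * (∑ i, A j i * v i) - L * ∑ i, v i := by
      simp only [sub_mul, Finset.sum_sub_distrib, Finset.sum_mul, Finset.mul_sum]
      rw [Finset.sum_comm]
      congr 1
      · exact Finset.sum_congr rfl fun j _ => Finset.sum_congr rfl fun i _ => by ring
    rw [this, hsum0]
    simp [hker]
  · intro h
    -- set up the Euclidean space framework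
    classical
    let B : (J ⊕ Unit) → EuclideanSpace ℝ I := fun k =>
      Sum.elim (fun j => (WithLp.toLp 2 (fun i => A j i) : EuclideanSpace ℝ I)) (fun _ => (WithLp.toLp 2 (fun _ => (1:ℝ)))) k
    let W : Submodule ℝ (EuclideanSpace ℝ I) := Submodule.span ℝ (Set.range B)
    have hlp : (WithLp.toLp 2 (fun i => Real.log (p i)) : EuclideanSpace ℝ I) ∈ W := by
      rw [← Submodule.orthogonal_orthogonal W]
      intro v hv
      have hAv : ∀ j, ∑ i, A j i * v i = 0 := by
        intro j
        have := hv (B (Sum.inl j)) (Submodule.subset_span ⟨Sum.inl j, rfl⟩)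
        simpa [B, PiLp.inner_apply, RCLike.inner_apply, mul_comm] using this
      have hsv : ∑ i, v i = 0 := by
        have := hv (B (Sum.inr ())) (Submodule.subset_span ⟨Sum.inr (), rfl⟩)
        simpa [B, PiLp.inner_apply, RCLike.inner_apply] using this
      have := h v hAv hsv
      simpa [PiLp.inner_apply, RCLike.inner_apply, mul_comm] using this
    obtain ⟨c, hc⟩ := (Submodule.mem_span_range_iff_exists_fun ℝ).1 hlp
    refine expFam_of_affine_log A p hsum (fun j => c (Sum.inl j)) (c (Sum.inr ())) fun i => ?_
    have hci : ∑ k, c k • B k i = Real.log (p i) := by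
      have := congrArg (fun x : EuclideanSpace ℝ I => x i) hc
      simpa using this
    have : Real.log (p i) = ∑ j, c (Sum.inl j) * A j i + c (Sum.inr ()) := by
      rw [← hci, Fintype.sum_sum_type]
      simp [B]
    rw [← this, Real.exp_log (hpos i)]
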